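/- arXiv:2505.18810 — 3 statements merged into one kernel-verified Lean document; each statement's English description precedes it below -/
import Mathlib

section
/- Let X ⊆ ℝᵏ be open and let E : X → ℝ^{m×n} be a continuous matrix function such that rank(E(x)) = r for all x ∈ X. Then for every x₀ ∈ X there exist an open neighborhood X₀ ⊆ X of x₀, a continuous matrix function U : X₀ → ℝ^{m×m} invertible at every point, and a permutation matrix Π ∈ ℝ^{n×n}, such that U(x)ᵀ E(x) Π has the block form [[I_r, E₁₂(x)],[0, 0]] for all x ∈ X₀, where E₁₂ : X₀ → ℝ^{r×(n−r)} is continuous. -/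
open Matrix Set

/-- The permutation matrix associated with a permutation `σ` of the columns:
`(Π)_{i j} = 1` if `i = σ j` and `0` otherwise, so that `(M * Π) i j = M i (σ j)`. -/
def permMat {n : ℕ} (σ : Equiv.Perm (Fin n)) : Matrix (Fin n) (Fin n) ℝ :=
  Matrix.of fun i j => if i = σ j then (1 : ℝ) else 0

open Module Submodule

lemma mul_permMat {m n : ℕ} (σ : Equiv.Perm (Fin n)) (M : Matrix (Fin m) (Fin n) ℝ)
    (i : Fin m) (j : Fin n) : (M * permMat σ) i j = M i (σ j) := by
  rw [Matrix.mul_apply, Finset.sum_eq_single (σ j)]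
  · simp [permMat]
  · intro k _ hk; simp [permMat, hk]
  · simp

lemma permMat_mul_inv {n : ℕ} (σ : Equiv.Perm (Fin n)) :
    permMat σ * permMat σ⁻¹ = 1 := by
  ext i j
  rw [Matrix.mul_apply, Finset.sum_eq_single (σ⁻¹ j)]
  · simp [permMat, Matrix.one_apply]
  · intro k _ hk; simp [permMat, hk]; intro h; exact absurd h hk
  · simp

lemma isUnit_permMat_det {n : ℕ} (σ : Equiv.Perm (Fin n)) : IsUnit (permMat σ).det :=
  Matrix.isUnit_det_of_right_inverse (permMat_mul_inv σ)

lemma exists_perm_extend {r n : ℕ} (hrn : r ≤ n) (f : Fin r → Fin n)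
    (hf : Function.Injective f) :
    ∃ σ : Equiv.Perm (Fin n), ∀ l : Fin r, σ (Fin.castLE hrn l) = f l := by
  classical
  set A : Set (Fin n) := Set.range (Fin.castLE hrn) with hA
  set B : Set (Fin n) := Set.range f with hB
  let eA : Fin r ≃ A := Equiv.ofInjective _ (Fin.castLE_injective hrn)
  let eB : Fin r ≃ B := Equiv.ofInjective f hf
  have hcard : Fintype.card ↥Aᶜ = Fintype.card ↥Bᶜ := by
    rw [Fintype.card_compl_set, Fintype.card_compl_set,
      Set.card_range_of_injective hf, Set.card_range_of_injective (Fin.castLE_injective hrn)]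
  let eC : ↥Aᶜ ≃ ↥Bᶜ := Fintype.equivOfCardEq hcard
  refine ⟨(Equiv.Set.sumCompl A).symm.trans
    (((eA.symm.trans eB).sumCongr eC).trans (Equiv.Set.sumCompl B)), fun l => ?_⟩
  have hmem : Fin.castLE hrn l ∈ A := ⟨l, rfl⟩
  have h1 : (Equiv.Set.sumCompl A).symm (Fin.castLE hrn l) = Sum.inl ⟨_, hmem⟩ :=
    Equiv.Set.sumCompl_symm_apply_of_mem hmem
  have h2 : eA.symm ⟨Fin.castLE hrn l, hmem⟩ = l :=
    Equiv.ofInjective_symm_apply _ l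
  simp only [Equiv.trans_apply, h1, h2, Equiv.sumCongr_apply, Sum.map_inl, Equiv.Set.sumCompl_apply_inl, eB]; rfl

lemma exists_basis_cols_aux {m n r : ℕ} (M : Matrix (Fin m) (Fin n) ℝ)
    (hr : M.rank = r) (hrn : r ≤ n) (hrm : r ≤ m) :
    ∃ (σ : Equiv.Perm (Fin n)) (q : Fin m → Fin m → ℝ),
      LinearIndependent ℝ (fun l : Fin m =>
        if h : (l : ℕ) < r then Mᵀ (σ (Fin.castLE hrn ⟨l, h⟩)) else q l) := by
  classical
  obtain ⟨t, hts, htspan, htind⟩ := exists_linearIndependent ℝ (Set.range Mᵀ)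
  have htfin : t.Finite := (Set.finite_range Mᵀ).subset hts
  haveI := htfin.fintype
  have hcardt : Fintype.card t = r := by
    have h1 : finrank ℝ (span ℝ t) = r := by
      rw [htspan]; change finrank ℝ (span ℝ (range M.col)) = r
      rw [← Matrix.rank_eq_finrank_span_cols, hr]
    rw [finrank_span_set_eq_card htind, Set.toFinset_card] at h1
    exact h1
  obtain ⟨b, hb_sub, htb, hb_span, (hbind : LinearIndependent ℝ ((↑) : b → (Fin m → ℝ)))⟩ :=
    exists_linearIndepOn_id_extension htind
    (Set.subset_union_left (t := Set.range (fun i : Fin m => (Pi.single i 1 : Fin m → ℝ))))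
  have hbfin : b.Finite := (htfin.union (Set.finite_range _)).subset hb_sub
  haveI := hbfin.fintype
  have hspan_top : span ℝ b = ⊤ := by
    rw [eq_top_iff, ← (Pi.basisFun ℝ (Fin m)).span_eq]
    apply span_le.2
    intro v hv
    obtain ⟨i, rfl⟩ := hv
    have : (Pi.basisFun ℝ (Fin m)) i = Pi.single i 1 := Pi.basisFun_apply ℝ (Fin m) i
    rw [this]
    exact hb_span (Set.mem_union_right _ ⟨i, rfl⟩)
  have hcardb : Fintype.card b = m := by
    have h1 : finrank ℝ (span ℝ b) = b.toFinset.card := finrank_span_set_eq_card hbind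
    rw [hspan_top, Set.toFinset_card, finrank_top] at h1
    rw [← h1, Module.finrank_fintype_fun_eq_card, Fintype.card_fin]
  -- enumerate t
  let et : Fin r ≃ t := (Fintype.equivFinOfCardEq hcardt).symm
  -- enumerate u := b \ t
  let u : Set (Fin m → ℝ) := b \ t
  haveI : Fintype u := (hbfin.subset Set.diff_subset).fintype
  have hcardu : Fintype.card u = m - r := by
    have h2 : t.toFinset ⊆ b.toFinset := by
      intro z hz; rw [Set.mem_toFinset] at *; exact htb hz
    have : u.toFinset = b.toFinset \ t.toFinset := by
      ext z; simp [u, Set.mem_toFinset]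
    rw [← Set.toFinset_card, this, Finset.card_sdiff_of_subset h2, Set.toFinset_card, Set.toFinset_card,
      hcardt, hcardb]
  let eu : Fin (m - r) ≃ u := (Fintype.equivFinOfCardEq hcardu).symm
  -- choose column indices for t
  have hc0 : ∀ v : t, ∃ j, Mᵀ j = (v : Fin m → ℝ) := fun v => hts v.2
  choose c0 hc0spec using hc0
  have hc : Function.Injective (fun l : Fin r => c0 (et l)) := by
    intro l1 l2 h
    have : (et l1 : Fin m → ℝ) = (et l2 : Fin m → ℝ) := by
      simp only at h
      rw [← hc0spec (et l1), ← hc0spec (et l2), h]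
    exact et.injective (Subtype.ext this)
  obtain ⟨σ, hσ⟩ := exists_perm_extend hrn _ hc
  -- the q vectors
  refine ⟨σ, fun l => if h2 : (l : ℕ) - r < m - r then (eu ⟨(l : ℕ) - r, h2⟩ : Fin m → ℝ)
    else 0, ?_⟩
  -- the family maps injectively into b
  let g : Fin m → b := fun l =>
    if h : (l : ℕ) < r then ⟨(et ⟨l, h⟩ : Fin m → ℝ), htb (et ⟨l, h⟩).2⟩
    else ⟨(eu ⟨(l : ℕ) - r, by omega⟩ : Fin m → ℝ), (eu ⟨(l : ℕ) - r, by omega⟩).2.1⟩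
  have hfam : (fun l : Fin m =>
      if h : (l : ℕ) < r then Mᵀ (σ (Fin.castLE hrn ⟨l, h⟩)) else
        if h2 : (l : ℕ) - r < m - r then (eu ⟨(l : ℕ) - r, h2⟩ : Fin m → ℝ) else 0)
      = (fun v : b => (v : Fin m → ℝ)) ∘ g := by
    funext l
    by_cases h : (l : ℕ) < r
    · simp only [Function.comp_apply, g, dif_pos h, hσ ⟨l, h⟩, hc0spec]
    · have h2 : (l : ℕ) - r < m - r := by omega
      simp only [Function.comp_apply, g, dif_neg h, dif_pos h2]
  have hginj : Function.Injective g := by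
    intro l1 l2 hg
    by_cases h1 : (l1 : ℕ) < r <;> by_cases h2 : (l2 : ℕ) < r
    · simp only [g, dif_pos h1, dif_pos h2, Subtype.mk.injEq] at hg
      have := et.injective (Subtype.ext hg)
      simp only [Fin.mk.injEq] at this
      exact Fin.ext this
    · exfalso
      simp only [g, dif_pos h1, dif_neg h2, Subtype.mk.injEq] at hg
      exact (eu ⟨(l2 : ℕ) - r, by omega⟩).2.2 (by rw [← hg]; exact (et ⟨l1, h1⟩).2)
    · exfalso
      simp only [g, dif_neg h1, dif_pos h2, Subtype.mk.injEq] at hg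
      exact (eu ⟨(l1 : ℕ) - r, by omega⟩).2.2 (by rw [hg]; exact (et ⟨l2, h2⟩).2)
    · simp only [g, dif_neg h1, dif_neg h2, Subtype.mk.injEq] at hg
      have := eu.injective (Subtype.ext hg)
      have h3 : (l1 : ℕ) - r = (l2 : ℕ) - r := congrArg Fin.val this
      have := l1.isLt; have := l2.isLt
      exact Fin.ext (by omega)
  rw [hfam]
  exact hbind.comp g hginj

/-- a continuous matrix function of constant rank `r` admits, locally
around every point, a continuous pointwise invertible left transformation `U` and a
constant column permutation `Π` bringing it to the block form `[[I_r, E₁₂], [0, 0]]`. -/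
theorem local_constant_rank_normalization {k m n r : ℕ}
    (X : Set (Fin k → ℝ)) (hX : IsOpen X)
    (E : (Fin k → ℝ) → Matrix (Fin m) (Fin n) ℝ)
    (hEcont : ContinuousOn E X)
    (hrank : ∀ x ∈ X, (E x).rank = r)
    (x0 : Fin k → ℝ) (hx0 : x0 ∈ X) :
    ∃ (X0 : Set (Fin k → ℝ)) (U : (Fin k → ℝ) → Matrix (Fin m) (Fin m) ℝ)
      (σ : Equiv.Perm (Fin n))
      (E12 : (Fin k → ℝ) → Matrix (Fin r) (Fin (n - r)) ℝ),
      IsOpen X0 ∧ x0 ∈ X0 ∧ X0 ⊆ X ∧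
      ContinuousOn U X0 ∧ (∀ x ∈ X0, IsUnit (U x).det) ∧
      ContinuousOn E12 X0 ∧
      (∀ x ∈ X0, ∀ (i : Fin m) (j : Fin n),
        ((U x)ᵀ * E x * permMat σ) i j =
          if hi : (i : ℕ) < r then
            (if hj : (j : ℕ) < r then (if (i : ℕ) = (j : ℕ) then 1 else 0)
             else E12 x ⟨i, hi⟩ ⟨(j : ℕ) - r, by have := j.isLt; omega⟩)
          else 0) := by
  classical
  have hrm : r ≤ m := by have h := (E x0).rank_le_height; rwa [hrank x0 hx0] at h
  have hrn : r ≤ n := by have h := (E x0).rank_le_width; rwa [hrank x0 hx0] at h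
  obtain ⟨σ, q, hind⟩ := exists_basis_cols_aux (E x0) (hrank x0 hx0) hrn hrm
  set P : (Fin k → ℝ) → Matrix (Fin m) (Fin m) ℝ := fun x => Matrix.of fun i l =>
    if h : (l : ℕ) < r then E x i (σ (Fin.castLE hrn ⟨l, h⟩)) else q l i with hPdef
  have hPcont : ContinuousOn P X := by
    rw [continuousOn_iff_continuous_restrict]
    apply continuous_matrix
    intro i l
    by_cases h : (l : ℕ) < r
    · simp only [hPdef, domRestrict, Matrix.of_apply, dif_pos h]
      exact ((continuous_apply _).comp (continuous_apply i)).comp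
        (continuousOn_iff_continuous_restrict.1 hEcont)
    · simp only [hPdef, domRestrict, Matrix.of_apply, dif_neg h]
      exact continuous_const
  have hP0 : IsUnit (P x0).det := by
    rw [← Matrix.isUnit_iff_isUnit_det, ← Matrix.linearIndependent_cols_iff_isUnit]
    have hfam : (fun l => (P x0)ᵀ l) = (fun l : Fin m =>
        if h : (l : ℕ) < r then (E x0)ᵀ (σ (Fin.castLE hrn ⟨l, h⟩)) else q l) := by
      funext l
      by_cases h : (l : ℕ) < r
      · funext i; simp [hPdef, h]
      · funext i; simp [hPdef, h]
    change LinearIndependent ℝ (fun l => (P x0)ᵀ l)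
    rw [hfam]
    exact hind
  set X0 := X ∩ (fun x => (P x).det) ⁻¹' {(0:ℝ)}ᶜ with hX0def
  have hdetcont : ContinuousOn (fun x => (P x).det) X :=
    (continuous_id.matrix_det).comp_continuousOn hPcont
  have hX0open : IsOpen X0 := hdetcont.isOpen_inter_preimage hX isOpen_compl_singleton
  have hx0X0 : x0 ∈ X0 := ⟨hx0, by simpa using hP0.ne_zero⟩
  have hX0sub : X0 ⊆ X := inter_subset_left
  have hdet : ∀ x ∈ X0, IsUnit (P x).det := by
    intro x hx
    have : (P x).det ≠ 0 := hx.2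
    exact isUnit_iff_ne_zero.2 this
  have hPinvcont : ContinuousOn (fun x => (P x)⁻¹) X0 := by
    have h1 : ContinuousOn (fun x => (P x).det) X0 := hdetcont.mono hX0sub
    have h2 : ContinuousOn (fun x => ((P x).det)⁻¹) X0 :=
      h1.inv₀ (fun x hx => (hdet x hx).ne_zero)
    have h3 : ContinuousOn (fun x => (P x).adjugate) X0 :=
      (continuous_id.matrix_adjugate).comp_continuousOn (hPcont.mono hX0sub)
    have heq : (fun x => (P x)⁻¹) = fun x => ((P x).det)⁻¹ • (P x).adjugate := by
      funext x; rw [Matrix.inv_def, Ring.inverse_eq_inv']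
    rw [heq]
    exact h2.smul h3
  have hFcont : ContinuousOn (fun x => (P x)⁻¹ * E x * permMat σ) X0 := by
    rw [continuousOn_iff_continuous_restrict]
    exact ((continuousOn_iff_continuous_restrict.1 hPinvcont).matrix_mul
      (continuousOn_iff_continuous_restrict.1 (hEcont.mono hX0sub))).matrix_mul continuous_const
  refine ⟨X0, fun x => ((P x)⁻¹)ᵀ, σ,
    fun x => Matrix.of (fun i j => ((P x)⁻¹ * E x * permMat σ) (Fin.castLE hrm i)
      ⟨r + (j : ℕ), by have := j.isLt; omega⟩),
    hX0open, hx0X0, hX0sub, ?_, ?_, ?_, ?_⟩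
  · exact (continuous_id.matrix_transpose).comp_continuousOn hPinvcont
  · intro x hx
    rw [Matrix.det_transpose]
    exact (P x).isUnit_nonsing_inv_det (hdet x hx)
  · rw [continuousOn_iff_continuous_restrict]
    apply continuous_matrix
    intro i j
    exact ((continuous_apply _).comp (continuous_apply _)).comp
      (continuousOn_iff_continuous_restrict.1 hFcont)
  · intro x hx i j
    rw [transpose_transpose]
    set F := (P x)⁻¹ * E x * permMat σ with hFdef
    have hPinv : (P x)⁻¹ * P x = 1 := Matrix.nonsing_inv_mul _ (hdet x hx)
    have hblock1 : ∀ (i : Fin m) (j : Fin n) (hj : (j : ℕ) < r),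
        F i j = if i = (⟨(j : ℕ), lt_of_lt_of_le hj hrm⟩ : Fin m) then 1 else 0 := by
      intro i j hj
      have hcol : ∀ kk : Fin m, E x kk (σ j) = P x kk ⟨(j : ℕ), lt_of_lt_of_le hj hrm⟩ := by
        intro kk
        simp only [hPdef, Matrix.of_apply]
        rw [dif_pos hj]
        exact congrArg (E x kk) (congrArg σ (Fin.ext rfl))
      rw [hFdef, mul_permMat, Matrix.mul_apply]
      simp_rw [hcol]
      rw [← Matrix.mul_apply, hPinv, Matrix.one_apply]
    have hrankF : F.rank = r := by
      rw [hFdef, Matrix.rank_mul_eq_left_of_isUnit_det (permMat σ) ((P x)⁻¹ * E x)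
        (isUnit_permMat_det σ),
        Matrix.rank_mul_eq_right_of_isUnit_det ((P x)⁻¹) (E x)
        ((P x).isUnit_nonsing_inv_det (hdet x hx)),
        hrank x (hX0sub hx)]
    have hzero : ∀ (i0 : Fin m), r ≤ (i0 : ℕ) → ∀ (j0 : Fin n), F i0 j0 = 0 := by
      intro i0 hi0 j0
      by_contra hne
      let w : Fin (r + 1) → (Fin m → ℝ) := fun l =>
        if h : (l : ℕ) < r then (fun i => F i (Fin.castLE hrn ⟨l, h⟩)) else (fun i => F i j0)
      have hwmem : ∀ l, w l ∈ LinearMap.range F.mulVecLin := by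
        intro l
        by_cases h : (l : ℕ) < r
        · refine ⟨Pi.single (Fin.castLE hrn ⟨l, h⟩) 1, ?_⟩
          rw [Matrix.mulVecLin_apply, Matrix.mulVec_single]
          funext i; simp [w, dif_pos h]
        · refine ⟨Pi.single j0 1, ?_⟩
          rw [Matrix.mulVecLin_apply, Matrix.mulVec_single]
          funext i; simp [w, dif_neg h]
      have hw : LinearIndependent ℝ w := by
        rw [Fintype.linearIndependent_iff]
        intro g hg
        have hval : ∀ (l : Fin (r + 1)) (hl : (l : ℕ) < r) (i : Fin m),
            w l i = if i = (⟨(l : ℕ), lt_of_lt_of_le hl hrm⟩ : Fin m) then 1 else 0 := by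
          intro l hl i
          simp only [w, dif_pos hl]
          exact hblock1 i (Fin.castLE hrn ⟨l, hl⟩) hl
        have hglast : g ⟨r, lt_add_one r⟩ = 0 := by
          have h0 := congrFun hg i0
          rw [Finset.sum_apply] at h0
          rw [Finset.sum_eq_single (⟨r, lt_add_one r⟩ : Fin (r + 1))] at h0
          · simp only [Pi.smul_apply, smul_eq_mul, w, dif_neg (lt_irrefl r)] at h0
            simp only [Pi.zero_apply] at h0
            exact (mul_eq_zero.1 h0).resolve_right hne
          · intro l _ hl
            have hlr : (l : ℕ) < r := by
              have := l.isLt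
              rcases lt_or_eq_of_le (Nat.lt_succ_iff.1 l.isLt) with h' | h'
              · exact h'
              · exact absurd (Fin.ext h') hl
            rw [Pi.smul_apply, hval l hlr i0, if_neg, smul_zero]
            intro hcontra
            have h2 : (i0 : ℕ) = (l : ℕ) := by rw [hcontra]
            omega
          · simp
        intro l
        by_cases hl : (l : ℕ) < r
        · have h0 := congrFun hg ⟨(l : ℕ), lt_of_lt_of_le hl hrm⟩
          rw [Finset.sum_apply] at h0
          rw [Finset.sum_eq_single l] at h0
          · rw [Pi.smul_apply, hval l hl, if_pos rfl, smul_eq_mul, mul_one] at h0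
            exact h0
          · intro l' _ hl'
            by_cases hl'r : (l' : ℕ) < r
            · rw [Pi.smul_apply, hval l' hl'r, if_neg, smul_zero]
              intro hcontra
              have h1 : (l : ℕ) = (l' : ℕ) := by
                have := congrArg Fin.val hcontra
                simpa using this
              exact hl' (Fin.ext h1.symm)
            · have hl'e : l' = ⟨r, lt_add_one r⟩ := by
                have := l'.isLt
                exact Fin.ext (show (l' : ℕ) = r by omega)
              rw [hl'e, hglast, Pi.smul_apply, zero_smul]
          · simp
        · have hle : l = ⟨r, lt_add_one r⟩ := by
            have := l.isLt
            exact Fin.ext (show (l : ℕ) = r by omega)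
          rw [hle]; exact hglast
      have hw' : LinearIndependent ℝ
          (fun l => (⟨w l, hwmem l⟩ : LinearMap.range F.mulVecLin)) := by
        apply LinearIndependent.of_comp (LinearMap.range F.mulVecLin).subtype
        exact hw
      have hcard : Fintype.card (Fin (r + 1)) ≤ finrank ℝ (LinearMap.range F.mulVecLin) :=
        hw'.fintype_card_le_finrank
      have hfr : finrank ℝ (LinearMap.range F.mulVecLin) = r := hrankF
      rw [hfr, Fintype.card_fin] at hcard
      omega
    by_cases hi : (i : ℕ) < r
    · rw [dif_pos hi]
      by_cases hj : (j : ℕ) < r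
      · rw [dif_pos hj, hblock1 i j hj]
        simp [Fin.ext_iff]
      · rw [dif_neg hj]
        show F i j = F (Fin.castLE hrm ⟨i, hi⟩) ⟨r + ((j : ℕ) - r), by have := j.isLt; omega⟩
        have h1 : Fin.castLE hrm ⟨(i : ℕ), hi⟩ = i := Fin.ext rfl
        have h2 : (⟨r + ((j : ℕ) - r), by have := j.isLt; omega⟩ : Fin n) = j :=
          Fin.ext (show r + ((j : ℕ) - r) = (j : ℕ) by omega)
        rw [h1, h2]
    · rw [dif_neg hi]
      exact hzero i (le_of_not_gt hi) j
end

section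
/- Let X, X̃ ⊆ ℝⁿ be open, let φ ∈ C¹(X̃,X) be a diffeomorphism, and let D̄φ be a discrete Jacobian for φ such that D̄φ(x̃,x̃') is invertible for all x̃,x̃' ∈ X̃. Then the map D̄(φ^{-1}) : X × X → ℝ^{n×n} defined by D̄(φ^{-1})(x,x') = (D̄φ(φ^{-1}(x),φ^{-1}(x')))^{-1} is a discrete Jacobian for the inverse diffeomorphism φ^{-1} ∈ C¹(X,X̃). -/
open Matrix Set

noncomputable def jac {n m : ℕ} (f : (Fin n → ℝ) → (Fin m → ℝ)) (x : Fin n → ℝ) :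
    Matrix (Fin m) (Fin n) ℝ :=
  Matrix.of fun i j => fderiv ℝ f x (Pi.single j 1) i

def IsDiscreteJacobian {n m : ℕ} (X : Set (Fin n → ℝ)) (F : (Fin n → ℝ) → (Fin m → ℝ))
    (DF : (Fin n → ℝ) → (Fin n → ℝ) → Matrix (Fin m) (Fin n) ℝ) : Prop :=
  ContinuousOn (fun p : (Fin n → ℝ) × (Fin n → ℝ) => DF p.1 p.2) (X ×ˢ X) ∧
  (∀ x ∈ X, ∀ x' ∈ X, (DF x x').mulVec (x' - x) = F x' - F x) ∧
  (∀ x ∈ X, DF x x = jac F x)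

lemma jac_eq_toMatrix' {n m : ℕ} (f : (Fin n → ℝ) → (Fin m → ℝ)) (x : Fin n → ℝ) :
    jac f x = LinearMap.toMatrix' (fderiv ℝ f x : (Fin n → ℝ) →ₗ[ℝ] (Fin m → ℝ)) := by
  ext i j
  rw [LinearMap.toMatrix'_apply]
  have : (fun j' => if j' = j then (1:ℝ) else 0) = Pi.single j 1 := by
    ext j'; simp [Pi.single_apply]
  rfl

/-- the inverse discrete Jacobian of a pointwise invertible discrete
Jacobian of a diffeomorphism `φ` is a discrete Jacobian for the inverse `ψ = φ⁻¹`. -/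
theorem inverse_discrete_jacobian {n : ℕ}
    (X Xt : Set (Fin n → ℝ)) (hX : IsOpen X) (hXt : IsOpen Xt)
    (φ ψ : (Fin n → ℝ) → (Fin n → ℝ))
    (hφ : ContDiffOn ℝ 1 φ Xt) (hφmap : Set.MapsTo φ Xt X)
    (hψ : ContDiffOn ℝ 1 ψ X) (hψmap : Set.MapsTo ψ X Xt)
    (hψφ : ∀ xt ∈ Xt, ψ (φ xt) = xt) (hφψ : ∀ x ∈ X, φ (ψ x) = x)
    (Dφ : (Fin n → ℝ) → (Fin n → ℝ) → Matrix (Fin n) (Fin n) ℝ)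
    (hDφ : IsDiscreteJacobian Xt φ Dφ)
    (hDφinv : ∀ xt ∈ Xt, ∀ xt' ∈ Xt, IsUnit (Dφ xt xt').det) :
    IsDiscreteJacobian X ψ (fun x x' => (Dφ (ψ x) (ψ x'))⁻¹) := by
  obtain ⟨hcont, hmv, hdiag⟩ := hDφ
  have hψc : ContinuousOn ψ X := hψ.continuousOn
  -- differentiability
  have hψd : ∀ x ∈ X, DifferentiableAt ℝ ψ x := fun x hx =>
    (hψ.differentiableOn one_ne_zero x hx).differentiableAt (hX.mem_nhds hx)
  have hφd : ∀ xt ∈ Xt, DifferentiableAt ℝ φ xt := fun xt hxt =>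
    (hφ.differentiableOn one_ne_zero xt hxt).differentiableAt (hXt.mem_nhds hxt)
  refine ⟨?_, ?_, ?_⟩
  · -- continuity
    have h1 : ContinuousOn (fun p : (Fin n → ℝ) × (Fin n → ℝ) => Dφ (ψ p.1) (ψ p.2))
        (X ×ˢ X) := by
      refine hcont.comp (ContinuousOn.prodMk ?_ ?_) ?_
      · exact hψc.comp continuousOn_fst (fun p hp => hp.1)
      · exact hψc.comp continuousOn_snd (fun p hp => hp.2)
      · exact fun p hp => ⟨hψmap hp.1, hψmap hp.2⟩
    intro p hp
    exact ContinuousAt.comp_continuousWithinAt (g := Inv.inv) (continuousAt_matrix_inv _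
      (NormedRing.inverse_continuousAt ((hDφinv _ (hψmap hp.1) _ (hψmap hp.2)).unit)))
      (h1 p hp)
  · intro x hx x' hx'
    have key := hmv _ (hψmap hx) _ (hψmap hx')
    rw [hφψ x hx, hφψ x' hx'] at key
    have hu := hDφinv _ (hψmap hx) _ (hψmap hx')
    have : (Dφ (ψ x) (ψ x'))⁻¹.mulVec ((Dφ (ψ x) (ψ x')).mulVec (ψ x' - ψ x))
        = ψ x' - ψ x := by
      rw [Matrix.mulVec_mulVec, Matrix.nonsing_inv_mul _ hu, Matrix.one_mulVec]
    rw [key] at this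
    exact this
  · intro x hx
    -- chain rule facts
    have hxt := hψmap hx
    have hdψ := hψd x hx
    have hdφ := hφd _ hxt
    have hcomp1 : fderiv ℝ φ (ψ x) ∘L fderiv ℝ ψ x = ContinuousLinearMap.id ℝ _ := by
      have : fderiv ℝ (φ ∘ ψ) x = ContinuousLinearMap.id ℝ (Fin n → ℝ) := by
        have heq : (φ ∘ ψ) =ᶠ[nhds x] id := by
          filter_upwards [hX.mem_nhds hx] with y hy
          exact hφψ y hy
        rw [heq.fderiv_eq, fderiv_id]
      rw [← this, fderiv_comp x hdφ hdψ]
    have hcomp2 : fderiv ℝ ψ x ∘L fderiv ℝ φ (ψ x) = ContinuousLinearMap.id ℝ _ := by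
      have : fderiv ℝ (ψ ∘ φ) (ψ x) = ContinuousLinearMap.id ℝ (Fin n → ℝ) := by
        have heq : (ψ ∘ φ) =ᶠ[nhds (ψ x)] id := by
          filter_upwards [hXt.mem_nhds hxt] with y hy
          exact hψφ y hy
        rw [heq.fderiv_eq, fderiv_id]
      rw [← this, fderiv_comp _ (by rw [hφψ x hx]; exact hdψ) hdφ]
      rw [hφψ x hx]
    -- matrix versions
    have hm1 : jac φ (ψ x) * jac ψ x = 1 := by
      rw [jac_eq_toMatrix', jac_eq_toMatrix', ← LinearMap.toMatrix'_comp]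
      have : (fderiv ℝ φ (ψ x) : (Fin n → ℝ) →ₗ[ℝ] (Fin n → ℝ)) ∘ₗ
          (fderiv ℝ ψ x : (Fin n → ℝ) →ₗ[ℝ] (Fin n → ℝ)) = LinearMap.id := by
        rw [← ContinuousLinearMap.toLinearMap_comp, hcomp1]; rfl
      rw [this, LinearMap.toMatrix'_id]
    have hm2 : jac ψ x * jac φ (ψ x) = 1 := by
      rw [jac_eq_toMatrix', jac_eq_toMatrix', ← LinearMap.toMatrix'_comp]
      have : (fderiv ℝ ψ x : (Fin n → ℝ) →ₗ[ℝ] (Fin n → ℝ)) ∘ₗ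
          (fderiv ℝ φ (ψ x) : (Fin n → ℝ) →ₗ[ℝ] (Fin n → ℝ)) = LinearMap.id := by
        rw [← ContinuousLinearMap.toLinearMap_comp, hcomp2]; rfl
      rw [this, LinearMap.toMatrix'_id]
    simp only
    rw [hdiag _ hxt]
    exact Matrix.inv_eq_left_inv hm2
end

section
/- Let X ⊆ ℝⁿ be open, H ∈ C¹(X,ℝ), let (E,z) be a gradient pair for H, let J, R : X → ℝ^{n×n} and B : X → ℝ^{n×m} be continuous with J(x) = −J(x)ᵀ and R(x) symmetric positive semi-definite for all x ∈ X. Let x : [0,T] → X be differentiable and u, y : [0,T] → ℝᵐ satisfy E(x(t)) x'(t) = (J(x(t)) − R(x(t))) z(x(t)) + B(x(t)) u(t) and y(t) = B(x(t))ᵀ z(x(t)) for all t ∈ [0,T]. Then for all t ∈ [0,T], d/dt H(x(t)) = −z(x(t))ᵀ R(x(t)) z(x(t)) + y(t)ᵀ u(t), and in particular d/dt H(x(t)) ≤ y(t)ᵀ u(t). -/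
open Matrix Set

noncomputable def grad {n : ℕ} (f : (Fin n → ℝ) → ℝ) (x : Fin n → ℝ) : Fin n → ℝ :=
  fun i => fderiv ℝ f x (Pi.single i 1)

lemma fderiv_eq_grad_dot {n : ℕ} (f : (Fin n → ℝ) → ℝ) (p v : Fin n → ℝ)
    : fderiv ℝ f p v = grad f p ⬝ᵥ v := by
  have hv : v = ∑ i, v i • (Pi.single i 1 : Fin n → ℝ) := by
    ext j; simp [Pi.single_apply, Finset.sum_apply]
  conv_lhs => rw [hv]
  rw [map_sum]
  simp [grad, dotProduct, mul_comm]

/-- the power balance equation and dissipation inequality for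
time-invariant port-Hamiltonian descriptor systems. -/
theorem pHDAE_power_balance {n m : ℕ}
    (X : Set (Fin n → ℝ)) (hX : IsOpen X)
    (H : (Fin n → ℝ) → ℝ) (hH : ContDiffOn ℝ 1 H X)
    (E : (Fin n → ℝ) → Matrix (Fin n) (Fin n) ℝ) (z : (Fin n → ℝ) → (Fin n → ℝ))
    (hEcont : ContinuousOn E X) (hzcont : ContinuousOn z X)
    (hgradpair : ∀ x ∈ X, (E x)ᵀ.mulVec (z x) = grad H x)
    (J R : (Fin n → ℝ) → Matrix (Fin n) (Fin n) ℝ)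
    (B : (Fin n → ℝ) → Matrix (Fin n) (Fin m) ℝ)
    (hJcont : ContinuousOn J X) (hRcont : ContinuousOn R X) (hBcont : ContinuousOn B X)
    (hJskew : ∀ x ∈ X, (J x)ᵀ = -(J x))
    (hRpsd : ∀ x ∈ X, (R x).PosSemidef)
    (T : ℝ) (hT : 0 < T)
    (x : ℝ → (Fin n → ℝ)) (x' : ℝ → (Fin n → ℝ))
    (u y : ℝ → (Fin m → ℝ))
    (hxX : ∀ t ∈ Set.Icc 0 T, x t ∈ X)
    (hx' : ∀ t ∈ Set.Icc 0 T, HasDerivAt x (x' t) t)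
    (hdyn : ∀ t ∈ Set.Icc 0 T,
      (E (x t)).mulVec (x' t)
        = (J (x t) - R (x t)).mulVec (z (x t)) + (B (x t)).mulVec (u t))
    (hout : ∀ t ∈ Set.Icc 0 T, y t = (B (x t))ᵀ.mulVec (z (x t))) :
    ∀ t ∈ Set.Icc 0 T,
      HasDerivAt (fun s => H (x s))
        (-(z (x t) ⬝ᵥ (R (x t)).mulVec (z (x t))) + y t ⬝ᵥ u t) t
      ∧ -(z (x t) ⬝ᵥ (R (x t)).mulVec (z (x t))) + y t ⬝ᵥ u t ≤ y t ⬝ᵥ u t := by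
  intro t ht
  have hmem : x t ∈ X := hxX t ht
  have hHd : HasFDerivAt H (fderiv ℝ H (x t)) (x t) :=
    ((hH.contDiffAt (hX.mem_nhds hmem)).differentiableAt one_ne_zero).hasFDerivAt
  have hcomp : HasDerivAt (fun s => H (x s)) (fderiv ℝ H (x t) (x' t)) t :=
    hHd.comp_hasDerivAt t (hx' t ht)
  have hJz : z (x t) ⬝ᵥ (J (x t)).mulVec (z (x t)) = 0 := by
    have h1 : z (x t) ⬝ᵥ (J (x t)).mulVec (z (x t))
        = -(z (x t) ⬝ᵥ (J (x t)).mulVec (z (x t))) := by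
      conv_lhs => rw [dotProduct_mulVec, ← mulVec_transpose, hJskew _ hmem, neg_mulVec,
        neg_dotProduct, dotProduct_comm]
    linarith
  have hkey : fderiv ℝ H (x t) (x' t)
      = -(z (x t) ⬝ᵥ (R (x t)).mulVec (z (x t))) + y t ⬝ᵥ u t := by
    rw [fderiv_eq_grad_dot, ← hgradpair _ hmem]
    have h2 : (E (x t))ᵀ.mulVec (z (x t)) ⬝ᵥ x' t
        = z (x t) ⬝ᵥ (E (x t)).mulVec (x' t) := by
      rw [mulVec_transpose, ← dotProduct_mulVec]
    rw [h2, hdyn t ht, hout t ht]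
    conv_rhs => rw [mulVec_transpose, ← dotProduct_mulVec]
    rw [dotProduct_add, sub_mulVec, dotProduct_sub, hJz]
    ring
  refine ⟨hkey ▸ hcomp, ?_⟩
  have hpsd := (hRpsd _ hmem).dotProduct_mulVec_nonneg (z (x t))
  simp only [RCLike.re_to_real, star_trivial] at hpsd
  have : (0:ℝ) ≤ z (x t) ⬝ᵥ (R (x t)).mulVec (z (x t)) := by
    simpa [dotProduct, mulVec] using hpsd
  linarith
end
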